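/- For each n, d | n, and coprime x > y ≥ 1, let a = a(n,d,x,y) be any integer with y·a ≡ n/d (mod x), and set e(t) = exp(2πi·t). Define G₃(n) = Σ_{d | n} Σ_{x > y ≥ 1, gcd(x,y)=1, Y(n,d,x,y) > 1} (1/x)·Σ_{b=1}^{x−1} e(a·b/x)·Σ_{1 ≤ m < Y(n,d,x,y)} ( A(n,d,x) + B(x,y)·m )·e(−b·m/x) (this value does not depend on the choice of a). Then for every ε > 0 there is a constant K(ε) > 0 such that |G₃(n)| ≤ K(ε)·n^{3/2+ε} for all positive integers n. -/

import Mathlib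

/-- `Y(n,d,x,y) = min( n/(d(x+y)) , (n - d²x²)/(dy) )`. -/
noncomputable def Ybound (n d x y : ℕ) : ℝ :=
  min ((n : ℝ) / ((d : ℝ) * ((x : ℝ) + y)))
      (((n : ℝ) - (d : ℝ) ^ 2 * (x : ℝ) ^ 2) / ((d : ℝ) * y))

/-- `A(n,d,x) = n/(dx) + dx`. -/
noncomputable def Aterm (n d x : ℕ) : ℝ := (n : ℝ) / ((d : ℝ) * x) + (d : ℝ) * x

/-- `B(x,y) = -y/x`. -/
noncomputable def Bterm (x y : ℕ) : ℝ := -((y : ℝ) / x)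

/-- `e(t) = exp(2πi·t)`. -/
noncomputable def eChar (t : ℝ) : ℂ := Complex.exp (2 * Real.pi * Complex.I * t)

/-- `G₃(n)`, built from a choice `a` of solutions of `y·a ≡ n/d (mod x)`;
the inner sum `Σ_{1 ≤ m < Y}` runs over the integers `m` with `1 ≤ m < Y(n,d,x,y)`. -/
noncomputable def Gthree (a : ℕ → ℕ → ℕ → ℕ → ℤ) (n : ℕ) : ℂ :=
  ∑ d ∈ n.divisors,
    ∑' p : ℕ × ℕ,
      if p.2 < p.1 ∧ 1 ≤ p.2 ∧ Nat.gcd p.1 p.2 = 1 ∧ 1 < Ybound n d p.1 p.2 then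
        (1 / (p.1 : ℂ)) *
          ∑ b ∈ Finset.Ico 1 p.1,
            eChar (((a n d p.1 p.2 * b : ℤ) : ℝ) / p.1) *
              ∑ m ∈ Finset.Ico 1 ⌈Ybound n d p.1 p.2⌉₊,
                ((Aterm n d p.1 + Bterm p.1 p.2 * m : ℝ) : ℂ) *
                  eChar (-(((b : ℝ) * m) / p.1))
      else 0


lemma eChar_int_div_pow (x : ℕ) (k : ℤ) (b : ℕ) :
    eChar (((k * b : ℤ) : ℝ) / x) = Complex.exp (2 * Real.pi * Complex.I * ((k : ℂ) / x)) ^ b := by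
  rw [← Complex.exp_nat_mul, eChar]
  congr 1
  push_cast
  ring

lemma charsum (x : ℕ) (hx : 2 ≤ x) (k : ℤ) :
    ∑ b ∈ Finset.Ico 1 x, eChar (((k * b : ℤ) : ℝ) / x) =
      if (x : ℤ) ∣ k then ((x : ℂ) - 1) else -1 := by
  have hx0 : x ≠ 0 := by omega
  have hx0' : (x : ℂ) ≠ 0 := by exact_mod_cast hx0
  set ζ : ℂ := Complex.exp (2 * Real.pi * Complex.I * ((k : ℂ) / x)) with hζ
  have hrw : ∀ b ∈ Finset.Ico 1 x, eChar (((k * b : ℤ) : ℝ) / x) = ζ ^ b := fun b _ =>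
    eChar_int_div_pow x k b
  rw [Finset.sum_congr rfl hrw]
  have hfull : ∑ b ∈ Finset.range x, ζ ^ b = (if (x : ℤ) ∣ k then (x : ℂ) else 0) := by
    by_cases hdvd : (x : ℤ) ∣ k
    · obtain ⟨j, hj⟩ := hdvd
      have hζ1 : ζ = 1 := by
        rw [hζ, hj]
        have harg : (2 : ℂ) * Real.pi * Complex.I * (((x * j : ℤ) : ℂ) / x)
            = j * (2 * Real.pi * Complex.I) := by
          push_cast; field_simp
        rw [harg]
        exact Complex.exp_int_mul_two_pi_mul_I j
      simp [hζ1]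
      exact fun h => absurd ⟨j, hj⟩ h
    · have hζne : ζ ≠ 1 := by
        intro h
        rw [hζ, Complex.exp_eq_one_iff] at h
        obtain ⟨j, hj⟩ := h
        apply hdvd
        have h2 : (2 : ℂ) * Real.pi * Complex.I ≠ 0 := by
          simp [Complex.I_ne_zero, Real.pi_ne_zero, Complex.ofReal_ne_zero]
        have hk : (k : ℂ) = j * x := by
          field_simp at hj
          have h' : (2 : ℂ) * Real.pi * Complex.I * (k : ℂ)
              = 2 * Real.pi * Complex.I * ((j : ℂ) * x) := by linear_combination (2 * Real.pi * Complex.I) * hj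
          exact mul_left_cancel₀ h2 h'
        have : k = j * x := by exact_mod_cast hk
        exact ⟨j, by linarith⟩
      rw [geom_sum_eq hζne]
      have hζx : ζ ^ x = 1 := by
        rw [hζ, ← Complex.exp_nat_mul]
        have harg : (x : ℂ) * (2 * Real.pi * Complex.I * ((k : ℂ) / x))
            = k * (2 * Real.pi * Complex.I) := by
          field_simp
        rw [harg]
        exact_mod_cast Complex.exp_int_mul_two_pi_mul_I k
      simp [hζx, hdvd]
  have hsplit : ∑ b ∈ Finset.range x, ζ ^ b = ζ ^ 0 + ∑ b ∈ Finset.Ico 1 x, ζ ^ b := by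
    rw [Finset.range_eq_Ico, ← Finset.sum_eq_sum_Ico_succ_bot (by omega : 0 < x)]
  rw [hsplit] at hfull
  by_cases hdvd : (x : ℤ) ∣ k <;> simp [hdvd] at hfull ⊢ <;> linear_combination hfull


-- at most one solution in a window of length ≤ x
lemma window_le_one (x : ℕ) (a0 : ℤ) (s r : ℕ) (hr : r ≤ x) :
    ((Finset.Ico s (s + r)).filter (fun m : ℕ => (x : ℤ) ∣ a0 - (m : ℤ))).card ≤ 1 := by
  rw [Finset.card_le_one]
  intro i hi j hj
  simp only [Finset.mem_filter, Finset.mem_Ico] at hi hj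
  obtain ⟨⟨hi1, hi2⟩, hid⟩ := hi
  obtain ⟨⟨hj1, hj2⟩, hjd⟩ := hj
  have hdvd : (x : ℤ) ∣ ((j : ℤ) - i) := by
    have := hid.sub hjd
    simpa using this
  have habs : |(j : ℤ) - i| < x := by
    rw [abs_lt]; constructor <;> push_cast <;> omega
  have := Int.eq_zero_of_abs_lt_dvd hdvd habs
  omega

lemma window_eq_one (x : ℕ) (hx : 1 ≤ x) (a0 : ℤ) (s : ℕ) :
    ((Finset.Ico s (s + x)).filter (fun m : ℕ => (x : ℤ) ∣ a0 - (m : ℤ))).card = 1 := by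
  refine le_antisymm (window_le_one x a0 s x le_rfl) ?_
  rw [Nat.one_le_iff_ne_zero, ← Nat.pos_iff_ne_zero, Finset.card_pos]
  have hx0 : (0 : ℤ) < x := by exact_mod_cast hx
  refine ⟨s + ((a0 - s) % x).toNat, ?_⟩
  have hnn : (0 : ℤ) ≤ (a0 - s) % x := Int.emod_nonneg _ (by positivity)
  have hlt : (a0 - s) % x < x := Int.emod_lt_of_pos _ hx0
  simp only [Finset.mem_filter, Finset.mem_Ico]
  refine ⟨⟨Nat.le_add_right _ _, ?_⟩, ?_⟩
  · have : ((a0 - s) % x).toNat < x := by omega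
    omega
  · rw [show ((s + ((a0 - s) % x).toNat : ℕ) : ℤ) = s + (a0 - s) % x by push_cast [Int.toNat_of_nonneg hnn]; ring]
    have : a0 - (s + (a0 - s) % x) = (x : ℤ) * ((a0 - s) / x) := by
      have := Int.mul_ediv_add_emod (a0 - s) x
      linarith
    rw [this]
    exact Dvd.intro _ rfl

lemma count_blocks (x : ℕ) (hx : 1 ≤ x) (a0 : ℤ) (r q : ℕ) :
    ((Finset.Ico 1 (1 + r + q * x)).filter (fun m : ℕ => (x : ℤ) ∣ a0 - (m : ℤ))).card
      = ((Finset.Ico 1 (1 + r)).filter (fun m : ℕ => (x : ℤ) ∣ a0 - (m : ℤ))).card + q := by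
  induction q with
  | zero => simp
  | succ q ih =>
    have hsplit : Finset.Ico 1 (1 + r + (q + 1) * x)
        = Finset.Ico 1 (1 + r + q * x) ∪ Finset.Ico (1 + r + q * x) (1 + r + q * x + x) := by
      rw [Finset.Ico_union_Ico_eq_Ico (by omega) (by omega)]
      congr 1; ring
    rw [hsplit, Finset.filter_union, Finset.card_union_of_disjoint, ih,
      window_eq_one x hx a0 _]
    · ring
    · exact Finset.disjoint_filter_filter (Finset.Ico_disjoint_Ico_consecutive _ _ _)

/-- the discrepancy bound: for `t ≥ 1`,
`|count(Ico 1 t) - (t-1)/x| ≤ 1`. -/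
lemma count_bound (x : ℕ) (hx : 1 ≤ x) (a0 : ℤ) (t : ℕ) (ht : 1 ≤ t) :
    |((((Finset.Ico 1 t).filter (fun m : ℕ => (x : ℤ) ∣ a0 - (m : ℤ))).card : ℝ))
      - ((t : ℝ) - 1) / x| ≤ 1 := by
  obtain ⟨u, rfl⟩ : ∃ u, t = 1 + u := ⟨t - 1, by omega⟩
  set r := u % x with hr
  set q := u / x with hq
  have hu : u = r + q * x := by rw [hr, hq]; rw [Nat.mod_add_div'];
  have hcnt := count_blocks x hx a0 r q
  rw [show 1 + u = 1 + r + q * x by omega] at *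
  rw [hcnt]
  have hsmall_le : ((Finset.Ico 1 (1 + r)).filter (fun m : ℕ => (x : ℤ) ∣ a0 - (m : ℤ))).card ≤ 1 := by
    have := window_le_one x a0 1 r (le_of_lt (Nat.mod_lt _ (by omega)))
    simpa using this
  have hrx : r < x := Nat.mod_lt _ (by omega)
  have hx0 : (0 : ℝ) < x := by exact_mod_cast hx
  have hcast : ((1 : ℝ) + r + q * x - 1) / x = q + r / x := by
    field_simp; ring
  push_cast
  rw [hcast]
  set c : ℝ := (((Finset.Ico 1 (1 + r)).filter (fun m : ℕ => (x : ℤ) ∣ a0 - (m : ℤ))).card : ℝ) with hc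
  have hc0 : 0 ≤ c := by rw [hc]; exact Nat.cast_nonneg _
  have hc1 : c ≤ 1 := by rw [hc]; exact_mod_cast hsmall_le
  have hr0 : (0 : ℝ) ≤ (r : ℝ) / x := by positivity
  have hr1 : (r : ℝ) / x < 1 := by
    rw [div_lt_one hx0]; exact_mod_cast hrx
  rw [abs_le]; constructor <;> nlinarith

lemma abel_bound (x M : ℕ) (hx : 2 ≤ x) (hM : 1 ≤ M) (a0 : ℤ) (A B : ℝ) :
    |∑ m ∈ Finset.Ico 1 M,
        (((if (x : ℤ) ∣ a0 - (m : ℤ) then (1 : ℝ) else 0) - 1 / x) * (A + B * m))|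
      ≤ |A| + 2 * |B| * M := by
  set c : ℕ → ℝ := fun m => (if (x : ℤ) ∣ a0 - (m : ℤ) then (1 : ℝ) else 0) - 1 / x with hc
  set F : ℕ → ℝ := fun t => ∑ m ∈ Finset.Ico 1 t, c m with hF
  have hFbnd : ∀ t, 1 ≤ t → |F t| ≤ 1 := by
    intro t ht
    have hsum : F t = ((((Finset.Ico 1 t).filter
        (fun m : ℕ => (x : ℤ) ∣ a0 - (m : ℤ))).card : ℝ) - ((t : ℝ) - 1) / x) := by
      rw [hF]
      simp only [hc, Finset.sum_sub_distrib, Finset.sum_boole, Finset.sum_const,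
        Nat.card_Ico, nsmul_eq_mul, mul_one_div]
      rw [Nat.cast_sub ht]
      push_cast
      ring
    rw [hsum]
    exact count_bound x (by omega) a0 t ht
  -- step 1: split the sum
  have hsplit : ∑ m ∈ Finset.Ico 1 M, c m * (A + B * m)
      = A * F M + B * ∑ m ∈ Finset.Ico 1 M, c m * m := by
    rw [hF, Finset.mul_sum, Finset.mul_sum, ← Finset.sum_add_distrib]
    refine Finset.sum_congr rfl fun m _ => by ring
  -- step 2: Abel
  have habel : ∑ m ∈ Finset.Ico 1 M, c m * m
      = ∑ t ∈ Finset.Ico 1 M, (F M - F t) := by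
    have h1 : ∀ m ∈ Finset.Ico 1 M, c m * m = ∑ t ∈ Finset.Ico 1 (m + 1), c m := by
      intro m hm
      rw [Finset.sum_const, Nat.card_Ico, nsmul_eq_mul]
      simp [mul_comm]
    rw [Finset.sum_congr rfl h1, ← Finset.sum_Ico_Ico_comm 1 M (fun t m => c m)]
    refine Finset.sum_congr rfl fun t ht => ?_
    rw [Finset.mem_Ico] at ht
    have : F t + ∑ m ∈ Finset.Ico t M, c m = F M := by
      rw [hF]
      exact Finset.sum_Ico_consecutive _ ht.1 (le_of_lt ht.2)
    linarith
  rw [hsplit, habel]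
  have hbnd2 : |∑ t ∈ Finset.Ico 1 M, (F M - F t)| ≤ 2 * (M - 1) := by
    calc |∑ t ∈ Finset.Ico 1 M, (F M - F t)| ≤ ∑ t ∈ Finset.Ico 1 M, |F M - F t| :=
          Finset.abs_sum_le_sum_abs _ _
      _ ≤ ∑ t ∈ Finset.Ico 1 M, 2 := by
          refine Finset.sum_le_sum fun t ht => ?_
          rw [Finset.mem_Ico] at ht
          have h1 := hFbnd M hM
          have h2 := hFbnd t ht.1
          calc |F M - F t| ≤ |F M| + |F t| := abs_sub _ _
            _ ≤ 2 := by linarith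
      _ = 2 * ((M : ℝ) - 1) := by
          rw [Finset.sum_const, Nat.card_Ico, nsmul_eq_mul]
          push_cast [Nat.cast_sub hM]
          ring
  have hM1 : (1 : ℝ) ≤ M := by exact_mod_cast hM
  calc |A * F M + B * ∑ t ∈ Finset.Ico 1 M, (F M - F t)|
      ≤ |A * F M| + |B * ∑ t ∈ Finset.Ico 1 M, (F M - F t)| := abs_add_le _ _
    _ = |A| * |F M| + |B| * |∑ t ∈ Finset.Ico 1 M, (F M - F t)| := by rw [abs_mul, abs_mul]
    _ ≤ |A| * 1 + |B| * (2 * (M - 1)) := by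
        have h3 := hFbnd M hM
        exact add_le_add (mul_le_mul_of_nonneg_left h3 (abs_nonneg A))
          (mul_le_mul_of_nonneg_left hbnd2 (abs_nonneg B))
    _ ≤ |A| + 2 * |B| * M := by
        have := abs_nonneg B
        nlinarith

lemma eChar_mul (s t : ℝ) : eChar s * eChar t = eChar (s + t) := by
  rw [eChar, eChar, eChar, ← Complex.exp_add]
  congr 1
  push_cast
  ring

set_option maxHeartbeats 1000000 in
lemma term_bound (n d x y : ℕ) (a0 : ℤ) (hn : 0 < n) (hd1 : 1 ≤ d)
    (hyx : y < x) (hy : 1 ≤ y) (hY : 1 < Ybound n d x y) :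
    ‖(1 / (x : ℂ)) * ∑ b ∈ Finset.Ico 1 x,
        eChar (((a0 * b : ℤ) : ℝ) / x) *
          ∑ m ∈ Finset.Ico 1 ⌈Ybound n d x y⌉₊,
            ((Aterm n d x + Bterm x y * m : ℝ) : ℂ) * eChar (-(((b : ℝ) * m) / x))‖
      ≤ 6 * n / (d * x) := by
  have hx2 : 2 ≤ x := by omega
  have hx0 : (0 : ℝ) < x := by positivity
  have hd0 : (0 : ℝ) < d := by exact_mod_cast hd1
  have hy0 : (0 : ℝ) < y := by exact_mod_cast hy
  have hxy0 : (0 : ℝ) < (d : ℝ) * ((x : ℝ) + y) := by positivity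
  have hdy0 : (0 : ℝ) < (d : ℝ) * y := by positivity
  have hY1 : 1 < (n : ℝ) / ((d : ℝ) * ((x : ℝ) + y)) := lt_of_lt_of_le hY (min_le_left _ _)
  have hY2 : 1 < ((n : ℝ) - (d : ℝ) ^ 2 * (x : ℝ) ^ 2) / ((d : ℝ) * y) :=
    lt_of_lt_of_le hY (min_le_right _ _)
  have hnxy : (d : ℝ) * ((x : ℝ) + y) < n := by
    rwa [lt_div_iff₀ hxy0, one_mul] at hY1
  have hd2x2 : (d : ℝ) ^ 2 * (x : ℝ) ^ 2 < n := by
    rw [lt_div_iff₀ hdy0, one_mul] at hY2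
    nlinarith
  have hdx0 : (0 : ℝ) < (d : ℝ) * x := by positivity
  set Y := Ybound n d x y with hYdef
  set M := ⌈Y⌉₊ with hM
  have hY0 : (0 : ℝ) < Y := by linarith
  have hM1 : 1 ≤ M := Nat.one_le_ceil_iff.mpr hY0
  have hMY : (M : ℝ) ≤ Y + 1 := le_of_lt (Nat.ceil_lt_add_one (le_of_lt hY0))
  set A := Aterm n d x with hA
  set B := Bterm x y with hB
  -- rewrite the inner double sum
  have hswap : ∑ b ∈ Finset.Ico 1 x,
        eChar (((a0 * b : ℤ) : ℝ) / x) *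
          ∑ m ∈ Finset.Ico 1 M, ((A + B * m : ℝ) : ℂ) * eChar (-(((b : ℝ) * m) / x))
      = ∑ m ∈ Finset.Ico 1 M, ((A + B * m : ℝ) : ℂ) *
          (if (x : ℤ) ∣ a0 - (m : ℤ) then ((x : ℂ) - 1) else -1) := by
    calc ∑ b ∈ Finset.Ico 1 x, eChar (((a0 * b : ℤ) : ℝ) / x) *
          ∑ m ∈ Finset.Ico 1 M, ((A + B * m : ℝ) : ℂ) * eChar (-(((b : ℝ) * m) / x))
        = ∑ b ∈ Finset.Ico 1 x, ∑ m ∈ Finset.Ico 1 M,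
            ((A + B * m : ℝ) : ℂ) *
              (eChar (((a0 * b : ℤ) : ℝ) / x) * eChar (-(((b : ℝ) * m) / x))) := by
          refine Finset.sum_congr rfl fun b _ => ?_
          rw [Finset.mul_sum]
          refine Finset.sum_congr rfl fun m _ => by ring
      _ = ∑ m ∈ Finset.Ico 1 M, ∑ b ∈ Finset.Ico 1 x,
            ((A + B * m : ℝ) : ℂ) * eChar ((((a0 - m) * b : ℤ) : ℝ) / x) := by
          rw [Finset.sum_comm]
          refine Finset.sum_congr rfl fun m _ => Finset.sum_congr rfl fun b _ => ?_
          rw [eChar_mul]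
          congr 2
          push_cast
          ring
      _ = ∑ m ∈ Finset.Ico 1 M, ((A + B * m : ℝ) : ℂ) *
            (if (x : ℤ) ∣ a0 - (m : ℤ) then ((x : ℂ) - 1) else -1) := by
          refine Finset.sum_congr rfl fun m _ => ?_
          rw [← Finset.mul_sum, charsum x hx2 (a0 - m)]
  -- identify with a real sum
  set r : ℝ := ∑ m ∈ Finset.Ico 1 M,
      (((if (x : ℤ) ∣ a0 - (m : ℤ) then (1 : ℝ) else 0) - 1 / x) * (A + B * m)) with hr
  have hreal : (1 / (x : ℂ)) * ∑ b ∈ Finset.Ico 1 x,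
        eChar (((a0 * b : ℤ) : ℝ) / x) *
          ∑ m ∈ Finset.Ico 1 M, ((A + B * m : ℝ) : ℂ) * eChar (-(((b : ℝ) * m) / x))
      = (r : ℂ) := by
    rw [hswap, hr, Finset.mul_sum]
    push_cast
    refine Finset.sum_congr rfl fun m _ => ?_
    have hxC : (x : ℂ) ≠ 0 := Nat.cast_ne_zero.mpr (by omega)
    by_cases h : (x : ℤ) ∣ a0 - (m : ℤ) <;> simp only [h, if_true, if_false, Complex.ofReal_zero, Complex.ofReal_one] <;> field_simp <;> ring
  rw [hreal, Complex.norm_real, Real.norm_eq_abs]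
  have habel := abel_bound x M hx2 hM1 a0 A B
  rw [← hr] at habel
  -- numeric bounds
  have hAval : |A| ≤ 2 * ((n : ℝ) / ((d : ℝ) * x)) := by
    have hApos : 0 < A := by
      rw [hA, Aterm]; positivity
    rw [abs_of_pos hApos, hA, Aterm]
    have h1 : (d : ℝ) * x ≤ (n : ℝ) / ((d : ℝ) * x) := by
      rw [le_div_iff₀ hdx0]
      nlinarith
    linarith
  have hBval : |B| = (y : ℝ) / x := by
    rw [hB, Bterm, abs_neg, abs_of_nonneg (by positivity)]
  have hone : (1 : ℝ) ≤ (n : ℝ) / ((d : ℝ) * x) := by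
    rw [le_div_iff₀ hdx0, one_mul]
    nlinarith
  have hYle : Y ≤ (n : ℝ) / ((d : ℝ) * ((x : ℝ) + y)) := min_le_left _ _
  have hBY : (y : ℝ) / x * Y ≤ (n : ℝ) / ((d : ℝ) * x) := by
    have h1 : (y : ℝ) / x * Y ≤ (y : ℝ) / x * ((n : ℝ) / ((d : ℝ) * ((x : ℝ) + y))) := by
      apply mul_le_mul_of_nonneg_left hYle (by positivity)
    refine le_trans h1 ?_
    rw [div_mul_div_comm, div_le_div_iff₀ (by positivity) hdx0]
    have hn0 : (0 : ℝ) ≤ (n : ℝ) := Nat.cast_nonneg n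
    have key : (0 : ℝ) ≤ (n : ℝ) * ((d : ℝ) * (x : ℝ) ^ 2) := by positivity
    nlinarith [key]
  have hBx : (y : ℝ) / x ≤ (n : ℝ) / ((d : ℝ) * x) := by
    refine le_trans ?_ hone
    rw [div_le_one hx0]
    exact_mod_cast le_of_lt hyx
  have hBM : 2 * |B| * M ≤ 4 * ((n : ℝ) / ((d : ℝ) * x)) := by
    rw [hBval]
    have h1 : (y : ℝ) / x * M ≤ (y : ℝ) / x * (Y + 1) :=
      mul_le_mul_of_nonneg_left hMY (by positivity)
    have h2 : (y : ℝ) / x * (Y + 1) = (y : ℝ) / x * Y + (y : ℝ) / x := by ring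
    nlinarith
  have : |r| ≤ 6 * ((n : ℝ) / ((d : ℝ) * x)) := by linarith
  calc |r| ≤ 6 * ((n : ℝ) / ((d : ℝ) * x)) := this
    _ = 6 * n / (d * x) := by ring

lemma inv_sq_sum (N : ℕ) (hN : 1 ≤ N) :
    ∑ d ∈ Finset.Icc 1 N, (1 : ℝ) / (d : ℝ) ^ 2 ≤ 2 - 1 / N := by
  induction N, hN using Nat.le_induction with
  | base => norm_num
  | succ N hN ih =>
    rw [Finset.sum_Icc_succ_top (by omega : 1 ≤ N + 1)]
    have hN0 : (0 : ℝ) < N := by exact_mod_cast hN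
    have hN1 : (0 : ℝ) < (N : ℝ) + 1 := by linarith
    have key : (1 : ℝ) / ((N : ℝ) + 1) ^ 2 ≤ 1 / N - 1 / ((N : ℝ) + 1) := by
      rw [div_sub_div _ _ (ne_of_gt hN0) (ne_of_gt hN1), div_le_div_iff₀ (by positivity) (by positivity)]
      ring_nf
      nlinarith
    push_cast
    linarith


theorem stmt_6 (a : ℕ → ℕ → ℕ → ℕ → ℤ)
    (ha : ∀ n d x y : ℕ, 0 < n → d ∣ n → y < x → 1 ≤ y → Nat.gcd x y = 1 →
      (y : ℤ) * a n d x y ≡ ((n / d : ℕ) : ℤ) [ZMOD (x : ℤ)]) :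
    ∀ ε : ℝ, 0 < ε → ∃ K : ℝ, 0 < K ∧ ∀ n : ℕ, 0 < n →
      ‖Gthree a n‖ ≤ K * (n : ℝ) ^ ((3 : ℝ) / 2 + ε) := by
  intro ε hε
  refine ⟨12, by norm_num, fun n hn => ?_⟩
  -- per-divisor rewrite of the tsum as a finite sum
  have hterm0 : ∀ d ∈ n.divisors, ∀ p : ℕ × ℕ, p ∉ (Finset.range n ×ˢ Finset.range n) →
      (if p.2 < p.1 ∧ 1 ≤ p.2 ∧ Nat.gcd p.1 p.2 = 1 ∧ 1 < Ybound n d p.1 p.2 then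
        (1 / (p.1 : ℂ)) *
          ∑ b ∈ Finset.Ico 1 p.1,
            eChar (((a n d p.1 p.2 * b : ℤ) : ℝ) / p.1) *
              ∑ m ∈ Finset.Ico 1 ⌈Ybound n d p.1 p.2⌉₊,
                ((Aterm n d p.1 + Bterm p.1 p.2 * m : ℝ) : ℂ) *
                  eChar (-(((b : ℝ) * m) / p.1))
      else 0) = 0 := by
    intro d hd p hp
    rw [if_neg]
    rintro ⟨h1, h2, _, h4⟩
    apply hp
    have hd1 : 1 ≤ d := Nat.pos_of_mem_divisors hd
    have hx1 : 1 ≤ p.1 := by omega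
    have hY1 : 1 < (n : ℝ) / ((d : ℝ) * ((p.1 : ℝ) + p.2)) :=
      lt_of_lt_of_le h4 (min_le_left _ _)
    have hpos : (0 : ℝ) < (d : ℝ) * ((p.1 : ℝ) + p.2) := by
      have : (0:ℝ) < (d:ℝ) := by exact_mod_cast hd1
      have : (0:ℝ) < (p.1:ℝ) := by exact_mod_cast hx1
      positivity
    rw [lt_div_iff₀ hpos, one_mul] at hY1
    have : (d * (p.1 + p.2) : ℕ) < n := by exact_mod_cast (by push_cast; linarith : ((d * (p.1 + p.2) : ℕ) : ℝ) < n)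
    have hxn : p.1 < n := by nlinarith [hd1, h2]
    have hyn : p.2 < n := by nlinarith [hd1, hx1]
    exact Finset.mem_product.mpr ⟨Finset.mem_range.mpr hxn, Finset.mem_range.mpr hyn⟩
  have hGle : ‖Gthree a n‖ ≤
      ∑ d ∈ n.divisors, ∑ p ∈ (Finset.range n ×ˢ Finset.range n),
        (if p.2 < p.1 ∧ 1 ≤ p.2 ∧ Nat.gcd p.1 p.2 = 1 ∧ 1 < Ybound n d p.1 p.2 then
          (6 : ℝ) * n / (d * p.1) else 0) := by
    rw [Gthree]
    refine le_trans (norm_sum_le _ _) (Finset.sum_le_sum fun d hd => ?_)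
    rw [tsum_eq_sum (hterm0 d hd)]
    refine le_trans (norm_sum_le _ _) (Finset.sum_le_sum fun p hp => ?_)
    by_cases hcond : p.2 < p.1 ∧ 1 ≤ p.2 ∧ Nat.gcd p.1 p.2 = 1 ∧ 1 < Ybound n d p.1 p.2
    · rw [if_pos hcond, if_pos hcond]
      exact term_bound n d p.1 p.2 (a n d p.1 p.2) hn (Nat.pos_of_mem_divisors hd)
        hcond.1 hcond.2.1 hcond.2.2.2
    · rw [if_neg hcond, if_neg hcond]; simp
  -- bound the double sum for each d
  have hinner : ∀ d ∈ n.divisors,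
      ∑ p ∈ (Finset.range n ×ˢ Finset.range n),
        (if p.2 < p.1 ∧ 1 ≤ p.2 ∧ Nat.gcd p.1 p.2 = 1 ∧ 1 < Ybound n d p.1 p.2 then
          (6 : ℝ) * n / (d * p.1) else 0)
      ≤ 6 * (n : ℝ) * Real.sqrt n / (d : ℝ) ^ 2 := by
    intro d hd
    have hd1 : 1 ≤ d := Nat.pos_of_mem_divisors hd
    have hd0 : (0 : ℝ) < d := by exact_mod_cast hd1
    rw [Finset.sum_product]
    have hstep1 : ∀ x ∈ Finset.range n,
        ∑ y ∈ Finset.range n,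
          (if y < x ∧ 1 ≤ y ∧ Nat.gcd x y = 1 ∧ 1 < Ybound n d x y then
            (6 : ℝ) * n / (d * x) else 0)
        ≤ (if 2 ≤ x ∧ d ^ 2 * x ^ 2 < n then 6 * (n : ℝ) / d else 0) := by
      intro x _
      by_cases hD : 2 ≤ x ∧ d ^ 2 * x ^ 2 < n
      · rw [if_pos hD]
        have hx0 : (0 : ℝ) < x := by
          have : 2 ≤ x := hD.1; positivity
        have hc0 : (0:ℝ) ≤ 6 * (n:ℝ) / (d * x) := by positivity
        calc ∑ y ∈ Finset.range n,
              (if y < x ∧ 1 ≤ y ∧ Nat.gcd x y = 1 ∧ 1 < Ybound n d x y then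
                (6 : ℝ) * n / (d * x) else 0)
            ≤ ∑ y ∈ Finset.range n,
              (if y ∈ Finset.Ico 1 x then (6 : ℝ) * n / (d * x) else 0) := by
              refine Finset.sum_le_sum fun y _ => ?_
              by_cases hc : y < x ∧ 1 ≤ y ∧ Nat.gcd x y = 1 ∧ 1 < Ybound n d x y
              · rw [if_pos hc, if_pos (Finset.mem_Ico.mpr ⟨hc.2.1, hc.1⟩)]
              · rw [if_neg hc]
                split <;> [exact hc0; exact le_refl 0]
          _ = ((Finset.range n).filter (fun y => y ∈ Finset.Ico 1 x)).card
                • ((6 : ℝ) * n / (d * x)) := by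
              rw [← Finset.sum_filter, Finset.sum_const]
          _ ≤ (x : ℝ) * ((6 : ℝ) * n / (d * x)) := by
              rw [nsmul_eq_mul]
              apply mul_le_mul_of_nonneg_right _ hc0
              have : ((Finset.range n).filter (fun y => y ∈ Finset.Ico 1 x)).card ≤ x := by
                calc ((Finset.range n).filter (fun y => y ∈ Finset.Ico 1 x)).card
                    ≤ (Finset.Ico 1 x).card := by
                      apply Finset.card_le_card
                      intro y hy
                      exact (Finset.mem_filter.mp hy).2
                  _ ≤ x := by rw [Nat.card_Ico]; omega
              exact_mod_cast this
          _ = 6 * (n : ℝ) / d := by field_simp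
      · rw [if_neg hD]
        apply le_of_eq
        apply Finset.sum_eq_zero
        intro y _
        rw [if_neg]
        rintro ⟨h1, h2, _, h4⟩
        apply hD
        constructor
        · omega
        · have hy0 : (0:ℝ) < y := by exact_mod_cast h2
          have hY2 : 1 < ((n : ℝ) - (d : ℝ) ^ 2 * (x : ℝ) ^ 2) / ((d : ℝ) * y) :=
            lt_of_lt_of_le h4 (min_le_right _ _)
          rw [lt_div_iff₀ (by positivity), one_mul] at hY2
          have : ((d ^ 2 * x ^ 2 : ℕ) : ℝ) < n := by push_cast; nlinarith
          exact_mod_cast this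
    refine le_trans (Finset.sum_le_sum hstep1) ?_
    have hcard : (((Finset.range n).filter (fun x => 2 ≤ x ∧ d ^ 2 * x ^ 2 < n)).card : ℝ)
        ≤ Real.sqrt n / d := by
      have hsub : (Finset.range n).filter (fun x => 2 ≤ x ∧ d ^ 2 * x ^ 2 < n)
          ⊆ Finset.Icc 2 ⌊Real.sqrt n / d⌋₊ := by
        intro x hx
        have hmem := Finset.mem_filter.mp hx
        have h2 := hmem.2.1
        have hlt := hmem.2.2
        rw [Finset.mem_Icc]
        refine ⟨h2, Nat.le_floor ?_⟩
        have hx0 : (0 : ℝ) ≤ (d : ℝ) * x := by positivity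
        have hsq : ((d : ℝ) * x) ^ 2 < n := by
          have : ((d ^ 2 * x ^ 2 : ℕ) : ℝ) < n := by exact_mod_cast hlt
          push_cast at this
          nlinarith
        have hdx : (d : ℝ) * x < Real.sqrt n := by
          rw [← Real.sqrt_sq hx0]
          exact Real.sqrt_lt_sqrt (by positivity) hsq
        rw [le_div_iff₀ hd0]
        linarith [mul_comm (d : ℝ) (x : ℝ)]
      calc (((Finset.range n).filter (fun x => 2 ≤ x ∧ d ^ 2 * x ^ 2 < n)).card : ℝ)
          ≤ ((Finset.Icc 2 ⌊Real.sqrt n / d⌋₊).card : ℝ) := by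
            exact_mod_cast Finset.card_le_card hsub
        _ ≤ (⌊Real.sqrt n / d⌋₊ : ℝ) := by
            rw [Nat.card_Icc]
            have : ⌊Real.sqrt n / d⌋₊ + 1 - 2 ≤ ⌊Real.sqrt n / d⌋₊ := by omega
            exact_mod_cast this
        _ ≤ Real.sqrt n / d := Nat.floor_le (by positivity)
    calc ∑ x ∈ Finset.range n, (if 2 ≤ x ∧ d ^ 2 * x ^ 2 < n then 6 * (n : ℝ) / d else 0)
        = (((Finset.range n).filter (fun x => 2 ≤ x ∧ d ^ 2 * x ^ 2 < n)).card : ℝ)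
            * (6 * (n : ℝ) / d) := by
          rw [← Finset.sum_filter, Finset.sum_const, nsmul_eq_mul]
      _ ≤ (Real.sqrt n / d) * (6 * (n : ℝ) / d) := by
          apply mul_le_mul_of_nonneg_right hcard (by positivity)
      _ = 6 * (n : ℝ) * Real.sqrt n / (d : ℝ) ^ 2 := by field_simp
  -- sum over divisors
  have hsum : ∑ d ∈ n.divisors, 6 * (n : ℝ) * Real.sqrt n / (d : ℝ) ^ 2
      ≤ 12 * ((n : ℝ) * Real.sqrt n) := by
    have h1 : ∑ d ∈ n.divisors, 6 * (n : ℝ) * Real.sqrt n / (d : ℝ) ^ 2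
        = 6 * (n : ℝ) * Real.sqrt n * ∑ d ∈ n.divisors, (1 : ℝ) / (d : ℝ) ^ 2 := by
      rw [Finset.mul_sum]
      refine Finset.sum_congr rfl fun d _ => by ring
    rw [h1]
    have h2 : ∑ d ∈ n.divisors, (1 : ℝ) / (d : ℝ) ^ 2 ≤ 2 := by
      calc ∑ d ∈ n.divisors, (1 : ℝ) / (d : ℝ) ^ 2
          ≤ ∑ d ∈ Finset.Icc 1 n, (1 : ℝ) / (d : ℝ) ^ 2 := by
            apply Finset.sum_le_sum_of_subset_of_nonneg
            · intro d hd
              rw [Finset.mem_Icc]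
              exact ⟨Nat.pos_of_mem_divisors hd, Nat.le_of_dvd hn (Nat.dvd_of_mem_divisors hd)⟩
            · intro d _ _; positivity
        _ ≤ 2 - 1 / (n:ℝ) := inv_sq_sum n hn
        _ ≤ 2 := by
            have : (0:ℝ) < n := by exact_mod_cast hn
            have : (0:ℝ) ≤ 1/(n:ℝ) := by positivity
            linarith
    have hnn : (0:ℝ) ≤ (n:ℝ) := Nat.cast_nonneg n
    nlinarith [Real.sqrt_nonneg (n : ℝ), hnn,
      mul_nonneg (mul_nonneg (by norm_num : (0:ℝ) ≤ 6) hnn) (Real.sqrt_nonneg (n:ℝ))]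
  -- final rpow computation
  have hrpow : (n : ℝ) * Real.sqrt n ≤ (n : ℝ) ^ ((3 : ℝ) / 2 + ε) := by
    have hn1 : (1 : ℝ) ≤ n := by exact_mod_cast hn
    have h0 : (0 : ℝ) < n := by linarith
    have heq : (n : ℝ) * Real.sqrt n = (n : ℝ) ^ ((3 : ℝ) / 2) := by
      rw [show (3 : ℝ) / 2 = 1 + 1 / 2 by norm_num, Real.rpow_add h0, Real.rpow_one,
        Real.sqrt_eq_rpow]
    rw [heq]
    exact Real.rpow_le_rpow_of_exponent_le hn1 (by linarith)
  calc ‖Gthree a n‖ ≤ _ := hGle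
    _ ≤ ∑ d ∈ n.divisors, 6 * (n : ℝ) * Real.sqrt n / (d : ℝ) ^ 2 := Finset.sum_le_sum hinner
    _ ≤ 12 * ((n : ℝ) * Real.sqrt n) := hsum
    _ ≤ 12 * (n : ℝ) ^ ((3 : ℝ) / 2 + ε) := by nlinarith [hrpow]
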